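/- For every real number a > 0 there exists a constant C > 0 such that |𝓕g_a(ξ)| ≤ C · (1 + |ξ|)^{-(a+1)} for all ξ ∈ ℝ. -/

import Mathlib

open MeasureTheory Real Set

noncomputable def brf (a ξ : ℝ) (z : ℂ) : ℂ :=
  (1 - z ^ 2) ^ (a : ℂ) * Complex.exp (((-2 * π * ξ : ℝ) : ℂ) * z * Complex.I)

lemma br_integrable {c r : ℝ} (hc : 0 < c) (hr : 0 < r) :
    IntegrableOn (fun u : ℝ => u ^ c * Real.exp (-(r * u))) (Ioi 0) := by
  have h0 := Real.GammaIntegral_convergent (by linarith : (0:ℝ) < c + 1)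
  have h1 := (integrableOn_Ioi_comp_mul_left_iff
      (fun x : ℝ => Real.exp (-x) * x ^ (c + 1 - 1)) 0 hr).mpr (by simpa using h0)
  have h2 : IntegrableOn (fun x : ℝ => r ^ (-c) * (Real.exp (-(r * x)) * (r * x) ^ (c + 1 - 1)))
      (Ioi 0) := h1.const_mul _
  refine h2.congr_fun (fun x hx => ?_) measurableSet_Ioi
  have hx' : (0:ℝ) < x := hx
  beta_reduce
  rw [add_sub_cancel_right, mul_rpow hr.le hx'.le, Real.rpow_neg hr.le]
  have : r ^ c ≠ 0 := by positivity
  field_simp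

lemma br_integral_rpow_exp {c r : ℝ} (hc : 0 < c) (hr : 0 < r) :
    ∫ u in Ioi (0:ℝ), u ^ c * Real.exp (-(r * u)) = (1/r) ^ (c+1) * Real.Gamma (c+1) := by
  have := integral_rpow_mul_exp_neg_mul_Ioi (by linarith : (0:ℝ) < c + 1) hr
  simpa using this

/-- norm of `brf` on the vertical edges of the contour. -/
lemma br_norm_edge {a ξ : ℝ} (ha : 0 < a) (hξ : 0 ≤ ξ) {x0 : ℝ} (hx0 : x0 ^ 2 = 1)
    {s : ℝ} (hs : 0 ≤ s) :
    ‖brf a ξ ((x0 : ℂ) - (s : ℂ) * Complex.I)‖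
      ≤ 3 ^ a * (s ^ a + s ^ (2*a)) * Real.exp (-(2 * π * ξ * s)) := by
  have hx0c : ((x0 : ℂ)) ^ 2 = 1 := by
    rw [← Complex.ofReal_pow, hx0, Complex.ofReal_one]
  have hz : 1 - ((x0 : ℂ) - (s : ℂ) * Complex.I) ^ 2
      = (s ^ 2 : ℝ) + (2 * x0 * s : ℝ) * Complex.I := by
    push_cast
    linear_combination (-(s:ℂ)^2) * Complex.I_sq + (-1:ℂ) * hx0c
  rw [brf, norm_mul, hz]
  have habs : ‖((s ^ 2 : ℝ) + (2 * x0 * s : ℝ) * Complex.I : ℂ)‖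
      = Real.sqrt (s ^ 4 + 4 * s ^ 2) := by
    rw [Complex.norm_add_mul_I]
    congr 1
    have : (x0:ℝ)^2 = 1 := hx0
    nlinarith [this]
  have hsq : Real.sqrt (s ^ 4 + 4 * s ^ 2) ≤ s ^ 2 + 2 * s := by
    rw [show s ^ 2 + 2 * s = Real.sqrt ((s ^ 2 + 2*s) ^ 2) from
      (Real.sqrt_sq (by nlinarith)).symm]
    apply Real.sqrt_le_sqrt
    nlinarith
  have h1 : ‖((s ^ 2 : ℝ) + (2 * x0 * s : ℝ) * Complex.I) ^ (a:ℂ)‖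
      ≤ 3 ^ a * (s ^ a + s ^ (2*a)) := by
    rw [Complex.norm_cpow_real, habs]
    calc Real.sqrt (s ^ 4 + 4 * s ^ 2) ^ a ≤ (s^2 + 2*s) ^ a :=
          Real.rpow_le_rpow (Real.sqrt_nonneg _) hsq ha.le
      _ ≤ 3 ^ a * (s ^ a + s ^ (2*a)) := by
          rcases le_total s 1 with h | h
          · calc (s^2+2*s)^a ≤ (3*s)^a :=
                  Real.rpow_le_rpow (by nlinarith) (by nlinarith) ha.le
              _ = 3^a * s^a := Real.mul_rpow (by norm_num) hs
              _ ≤ 3^a * (s^a + s^(2*a)) := by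
                  have : (0:ℝ) ≤ s ^ (2*a) := Real.rpow_nonneg hs _
                  nlinarith [Real.rpow_nonneg hs a, Real.rpow_pos_of_pos (show (0:ℝ)<3 by norm_num) a]
          · calc (s^2+2*s)^a ≤ (3*s^2)^a :=
                  Real.rpow_le_rpow (by nlinarith) (by nlinarith) ha.le
              _ = 3^a * s^(2*a) := by
                  rw [Real.mul_rpow (by norm_num) (by positivity), ← Real.rpow_natCast s 2,
                    ← Real.rpow_mul hs]
                  norm_num [mul_comm]
              _ ≤ 3^a * (s^a + s^(2*a)) := by
                  have : (0:ℝ) ≤ s ^ a := Real.rpow_nonneg hs _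
                  nlinarith [Real.rpow_pos_of_pos (show (0:ℝ)<3 by norm_num) a]
  have h2 : ‖Complex.exp (((-2 * π * ξ : ℝ) : ℂ) * ((x0:ℂ) - (s:ℂ) * Complex.I) * Complex.I)‖
      = Real.exp (-(2 * π * ξ * s)) := by
    rw [Complex.norm_exp]
    congr 1
    simp [Complex.mul_re, Complex.mul_im]
  rw [h2]
  exact mul_le_mul_of_nonneg_right h1 (Real.exp_nonneg _)

/-- norm of `brf` on the bottom edge. -/
lemma br_norm_bottom {a ξ : ℝ} (ha : 0 < a) {x R : ℝ} (hx : x ∈ Set.Icc (-1:ℝ) 1) (hR : 0 ≤ R) :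
    ‖brf a ξ ((x : ℂ) + (-R : ℝ) * Complex.I)‖
      ≤ (2 + R ^ 2) ^ a * Real.exp (-(2 * π * ξ * R)) := by
  rw [brf, norm_mul]
  have h1 : ‖(1 - ((x:ℂ) + (-R:ℝ) * Complex.I) ^ 2) ^ (a:ℂ)‖ ≤ (2 + R ^ 2) ^ a := by
    rw [Complex.norm_cpow_real]
    apply Real.rpow_le_rpow (norm_nonneg _) _ ha.le
    calc ‖(1 - ((x:ℂ) + (-R:ℝ) * Complex.I) ^ 2 : ℂ)‖
        ≤ ‖(1:ℂ)‖ + ‖(((x:ℂ) + (-R:ℝ) * Complex.I) ^ 2 : ℂ)‖ :=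
          (norm_sub_le _ _)
      _ = 1 + ‖((x:ℂ) + (-R:ℝ) * Complex.I : ℂ)‖ ^ 2 := by
          rw [norm_pow, norm_one]
      _ ≤ 2 + R ^ 2 := by
          rw [Complex.norm_add_mul_I]
          have hx2 : x^2 ≤ 1 := by nlinarith [hx.1, hx.2]
          have : Real.sqrt (x ^ 2 + (-R) ^ 2) ^ 2 = x^2 + (-R)^2 :=
            Real.sq_sqrt (by positivity)
          nlinarith [this]
  have h2 : ‖Complex.exp (((-2 * π * ξ : ℝ) : ℂ) * ((x:ℂ) + (-R:ℝ) * Complex.I) * Complex.I)‖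
      = Real.exp (-(2 * π * ξ * R)) := by
    rw [Complex.norm_exp]
    congr 1
    simp [Complex.mul_re, Complex.mul_im]
  rw [h2]
  exact mul_le_mul_of_nonneg_right h1 (Real.exp_nonneg _)

/-- continuity of `brf` on the closed left half strip. -/
lemma br_continuousOn {a ξ : ℝ} (ha : 0 < a) :
    ContinuousOn (brf a ξ) {z : ℂ | z.re ^ 2 ≤ 1} := by
  intro z hz
  apply ContinuousWithinAt.mul
  · apply ContinuousAt.continuousWithinAt
    have hbase : ContinuousAt (fun w : ℂ => 1 - w ^ 2) z :=
      (continuous_const.sub (continuous_pow 2)).continuousAt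
    have hre : 0 ≤ (1 - z ^ 2).re := by
      have hz' : z.re ^ 2 ≤ 1 := hz
      simp only [Complex.sub_re, Complex.one_re, pow_two, Complex.mul_re]
      nlinarith [sq_nonneg z.im, sq_nonneg z.re]
    have h3 : ContinuousAt (fun x : ℂ => x ^ (a:ℂ)) (1 - z ^ 2) :=
      Complex.continuousAt_cpow_const_of_re_pos (Or.inl hre) (by simpa using ha)
    exact ContinuousAt.comp (f := fun w : ℂ => 1 - w ^ 2) h3 hbase
  · apply Continuous.continuousWithinAt
    continuity

lemma br_differentiableAt {a ξ : ℝ} {z : ℂ} (hz : z.re ^ 2 < 1) :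
    DifferentiableAt ℂ (brf a ξ) z := by
  have hre : 0 < (1 - z ^ 2).re := by
    simp only [Complex.sub_re, Complex.one_re, pow_two, Complex.mul_re]
    nlinarith [sq_nonneg z.im]
  have h1 : DifferentiableAt ℂ (fun w : ℂ => (1 - w ^ 2) ^ (a:ℂ)) z := by
    apply DifferentiableAt.cpow
    · exact (differentiableAt_const _).sub (differentiableAt_id.pow 2)
    · exact differentiableAt_const _
    · exact Or.inl hre
  have h2 : DifferentiableAt ℂ
      (fun w : ℂ => Complex.exp (((-2 * π * ξ : ℝ) : ℂ) * w * Complex.I)) z := by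
    apply DifferentiableAt.cexp
    exact ((differentiableAt_const _).mul differentiableAt_id).mul (differentiableAt_const _)
  exact h1.mul h2

/-- the actual kernel -/
noncomputable def brg (a : ℝ) (t : ℝ) : ℂ := (((max (1 - t ^ 2) 0) ^ a : ℝ) : ℂ)

lemma brg_eq_zero {a t : ℝ} (ha : 0 < a) (ht : t ∉ Ioc (-1:ℝ) 1) : brg a t = 0 := by
  have h : 1 - t ^ 2 ≤ 0 := by
    rcases not_and_or.mp ht with h | h
    · push_neg at h; nlinarith
    · push_neg at h; nlinarith
  rw [brg, max_eq_right h, Real.zero_rpow ha.ne', Complex.ofReal_zero]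

lemma brF_eq {a : ℝ} (ha : 0 < a) (ξ : ℝ) :
    FourierTransform.fourier (brg a) ξ = ∫ x in (-1:ℝ)..1, brf a ξ ((x : ℂ) + (0:ℝ) * Complex.I) := by
  rw [Real.fourier_real_eq_integral_exp_smul]
  rw [← MeasureTheory.setIntegral_eq_integral_of_forall_compl_eq_zero
    (s := Ioc (-1:ℝ) 1) (fun x hx => by rw [brg_eq_zero ha hx, smul_zero])]
  rw [intervalIntegral.integral_of_le (by norm_num : (-1:ℝ) ≤ 1)]
  refine setIntegral_congr_fun measurableSet_Ioc (fun x hx => ?_)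
  have h1 : (0:ℝ) ≤ 1 - x ^ 2 := by nlinarith [hx.1, hx.2]
  have h2 : max (1 - x ^ 2) 0 = 1 - x ^ 2 := max_eq_left h1
  rw [brf, brg, h2, Complex.ofReal_cpow h1, smul_eq_mul]
  push_cast
  rw [mul_comm]
  ring_nf

lemma brF_even (a : ℝ) (ξ : ℝ) :
    FourierTransform.fourier (brg a) (-ξ) = FourierTransform.fourier (brg a) ξ := by
  rw [Real.fourier_real_eq_integral_exp_smul,
    Real.fourier_real_eq_integral_exp_smul]
  rw [← integral_neg_eq_self]
  congr 1
  funext v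
  have : brg a (-v) = brg a v := by rw [brg, brg]; norm_num
  rw [this]
  norm_num [mul_comm, mul_assoc, mul_left_comm]

lemma brF_trivial_bound {a : ℝ} (ha : 0 < a) (ξ : ℝ) :
    ‖FourierTransform.fourier (brg a) ξ‖ ≤ 2 := by
  rw [Real.fourier_real_eq_integral_exp_smul]
  rw [← MeasureTheory.setIntegral_eq_integral_of_forall_compl_eq_zero
    (s := Ioc (-1:ℝ) 1) (fun x hx => by rw [brg_eq_zero ha hx, smul_zero])]
  have key := norm_setIntegral_le_of_norm_le_const (μ := volume) (s := Ioc (-1:ℝ) 1)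
    (f := fun v : ℝ => Complex.exp (↑(-2 * π * v * ξ) * Complex.I) • brg a v)
    (C := 1) (by simp) ?_
  · refine key.trans ?_
    rw [Real.volume_real_Ioc]
    norm_num
  · intro x hx
    show ‖Complex.exp (↑(-2 * π * x * ξ) * Complex.I) • brg a x‖ ≤ 1
    rw [smul_eq_mul, norm_mul]
    have he : ‖Complex.exp (↑(-2 * π * x * ξ) * Complex.I)‖ = 1 := by
      rw [Complex.norm_exp]
      simp
    rw [he, one_mul, brg]
    have h1 : (0:ℝ) ≤ max (1 - x ^ 2) 0 := le_max_right _ _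
    have h2 : max (1 - x ^ 2) 0 ≤ 1 := by
      apply max_le _ zero_le_one
      nlinarith [hx.1, hx.2]
    rw [Complex.norm_real, Real.norm_eq_abs, abs_of_nonneg (Real.rpow_nonneg h1 _)]
    exact Real.rpow_le_one h1 h2 ha.le

noncomputable def brB (a ξ : ℝ) : ℝ :=
  3 ^ a * ((1/(2*π*ξ)) ^ (a+1) * Real.Gamma (a+1) + (1/(2*π*ξ)) ^ (2*a+1) * Real.Gamma (2*a+1))

lemma br_edge_integral_bound {a ξ : ℝ} (ha : 0 < a) (hξ : 0 < ξ) {x0 : ℝ} (hx0 : x0 ^ 2 = 1)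
    {R : ℝ} (hR : 0 ≤ R) :
    ‖∫ y in (-R)..0, brf a ξ ((x0 : ℂ) + (y : ℝ) * Complex.I)‖ ≤ brB a ξ := by
  have h2π : (0:ℝ) < 2 * π * ξ := by positivity
  have hx1 : |x0| ≤ 1 := by nlinarith [abs_nonneg x0, sq_abs x0]
  -- continuity of the edge integrand
  have hcont : ContinuousOn (fun y : ℝ => brf a ξ ((x0 : ℂ) + (y : ℝ) * Complex.I))
      (Icc (-R) 0) := by
    apply (br_continuousOn ha).comp
    · exact Continuous.continuousOn (by continuity)
    · intro y _
      show ((x0:ℂ) + (y:ℝ) * Complex.I).re ^ 2 ≤ 1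
      simp [Complex.add_re, Complex.ofReal_re, Complex.mul_re]
      nlinarith [sq_abs x0]
  have hM : ∀ y ∈ Icc (-R) (0:ℝ),
      ‖brf a ξ ((x0 : ℂ) + (y : ℝ) * Complex.I)‖
        ≤ 3 ^ a * ((-y) ^ a + (-y) ^ (2*a)) * Real.exp (-(2 * π * ξ * (-y))) := by
    intro y hy
    have h : (x0:ℂ) + (y:ℝ) * Complex.I = (x0:ℂ) - ((-y : ℝ) : ℂ) * Complex.I := by
      push_cast; ring
    rw [h]
    exact br_norm_edge ha hξ.le hx0 (by linarith [hy.2])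
  calc ‖∫ y in (-R)..0, brf a ξ ((x0 : ℂ) + (y : ℝ) * Complex.I)‖
      ≤ ∫ y in (-R)..0, ‖brf a ξ ((x0 : ℂ) + (y : ℝ) * Complex.I)‖ :=
        intervalIntegral.norm_integral_le_integral_norm (by linarith)
    _ ≤ ∫ y in (-R)..0, 3 ^ a * ((-y) ^ a + (-y) ^ (2*a)) * Real.exp (-(2 * π * ξ * (-y))) := by
        apply intervalIntegral.integral_mono_on (by linarith)
        · exact (hcont.norm.intervalIntegrable_of_Icc (by linarith))
        · apply ContinuousOn.intervalIntegrable_of_Icc (by linarith)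
          apply ContinuousOn.mul
          · apply ContinuousOn.mul continuousOn_const
            apply ContinuousOn.add
            · exact (continuousOn_neg.rpow_const (fun x _ => Or.inr ha.le))
            · exact (continuousOn_neg.rpow_const (fun x _ => Or.inr (by linarith)))
          · exact (Real.continuous_exp.comp (by continuity)).continuousOn
        · exact hM
    _ = ∫ s in (0:ℝ)..R, 3 ^ a * (s ^ a + s ^ (2*a)) * Real.exp (-(2 * π * ξ * s)) := by
        have hcn := intervalIntegral.integral_comp_neg (a := -R) (b := 0)
          (fun s : ℝ => 3 ^ a * (s ^ a + s ^ (2*a)) * Real.exp (-(2 * π * ξ * s)))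
        rw [hcn]
        norm_num
    _ = ∫ s in Ioc (0:ℝ) R, 3 ^ a * (s ^ a + s ^ (2*a)) * Real.exp (-(2 * π * ξ * s)) :=
        intervalIntegral.integral_of_le hR
    _ ≤ ∫ s in Ioi (0:ℝ), 3 ^ a * (s ^ a + s ^ (2*a)) * Real.exp (-(2 * π * ξ * s)) := by
        apply setIntegral_mono_set
        · have hi1 := br_integrable ha h2π
          have hi2 := br_integrable (by linarith : (0:ℝ) < 2*a) h2π
          have h3 : IntegrableOn (fun s : ℝ => 3 ^ a * (s ^ a * Real.exp (-(2*π*ξ*s))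
              + s ^ (2*a) * Real.exp (-(2*π*ξ*s)))) (Ioi 0) := (hi1.add hi2).const_mul _
          exact h3.congr_fun (fun s hs => by ring) measurableSet_Ioi
        · refine (ae_restrict_iff' measurableSet_Ioi).mpr (ae_of_all _ (fun s hs => ?_))
          have hs' : (0:ℝ) < s := hs
          positivity
        · exact HasSubset.Subset.eventuallyLE Ioc_subset_Ioi_self
    _ = brB a ξ := by
        rw [brB]
        have e1 : ∀ s : ℝ, 3 ^ a * (s ^ a + s ^ (2*a)) * Real.exp (-(2 * π * ξ * s))
            = 3 ^ a * (s ^ a * Real.exp (-(2*π*ξ*s)) + s ^ (2*a) * Real.exp (-(2*π*ξ*s))) := by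
          intro s; ring
        simp_rw [e1]
        rw [integral_const_mul, integral_add (br_integrable ha h2π)
          (br_integrable (by linarith : (0:ℝ) < 2*a) h2π),
          br_integral_rpow_exp ha h2π, br_integral_rpow_exp (by linarith : (0:ℝ) < 2*a) h2π]

lemma br_main {a ξ : ℝ} (ha : 0 < a) (hξ : 1 ≤ ξ) :
    ‖FourierTransform.fourier (brg a) ξ‖ ≤ 2 * brB a ξ := by
  have hξ0 : 0 < ξ := by linarith
  have key : ∀ R : ℝ, 0 ≤ R →
      ‖FourierTransform.fourier (brg a) ξ‖
        ≤ (2 + R ^ 2) ^ a * Real.exp (-(2 * π * ξ * R)) * 2 + (brB a ξ + brB a ξ) := by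
    intro R hR
    have rect := Complex.integral_boundary_rect_eq_zero_of_differentiable_on_off_countable
      (brf a ξ) ⟨-1, -R⟩ ⟨1, 0⟩ ∅ Set.countable_empty ?hc ?hd
    case hc =>
      apply (br_continuousOn ha).mono
      intro z hz
      rw [Complex.mem_reProdIm] at hz
      have h1 : z.re ∈ Set.uIcc (-1:ℝ) 1 := hz.1
      rw [Set.uIcc_of_le (by norm_num : (-1:ℝ) ≤ 1)] at h1
      show z.re ^ 2 ≤ 1
      nlinarith [h1.1, h1.2]
    case hd =>
      intro z hz
      have hz' := hz.1
      rw [Complex.mem_reProdIm] at hz'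
      have h1 := hz'.1
      rw [show min (Complex.re ⟨-1,-R⟩) (Complex.re ⟨1,0⟩) = -1 by norm_num [min_eq_left],
        show max (Complex.re ⟨-1,-R⟩) (Complex.re ⟨1,0⟩) = 1 by norm_num [max_eq_right]] at h1
      exact br_differentiableAt (by nlinarith [h1.1, h1.2])
    have hre1 : (⟨-1, -R⟩ : ℂ).re = -1 := rfl
    have him1 : (⟨-1, -R⟩ : ℂ).im = -R := rfl
    have hre2 : (⟨1, 0⟩ : ℂ).re = 1 := rfl
    have him2 : (⟨1, 0⟩ : ℂ).im = 0 := rfl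
    rw [hre1, him1, hre2, him2] at rect
    have hT : FourierTransform.fourier (brg a) ξ
        = (∫ x : ℝ in (-1:ℝ)..1, brf a ξ ((x:ℂ) + ((-R:ℝ):ℂ) * Complex.I))
          + Complex.I • (∫ y : ℝ in (-R:ℝ)..0, brf a ξ (((1:ℝ):ℂ) + (y:ℝ) * Complex.I))
          - Complex.I • (∫ y : ℝ in (-R:ℝ)..0, brf a ξ (((-1:ℝ):ℂ) + (y:ℝ) * Complex.I)) := by
      rw [brF_eq ha]
      push_cast at rect ⊢
      linear_combination -rect
    rw [hT]
    have hb : ‖∫ x : ℝ in (-1:ℝ)..1, brf a ξ ((x:ℂ) + ((-R:ℝ):ℂ) * Complex.I)‖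
        ≤ (2 + R ^ 2) ^ a * Real.exp (-(2 * π * ξ * R)) * 2 := by
      have := intervalIntegral.norm_integral_le_of_norm_le_const
        (a := (-1:ℝ)) (b := 1) (C := (2 + R ^ 2) ^ a * Real.exp (-(2 * π * ξ * R)))
        (f := fun x : ℝ => brf a ξ ((x:ℂ) + ((-R:ℝ):ℂ) * Complex.I)) ?_
      · calc ‖∫ x : ℝ in (-1:ℝ)..1, brf a ξ ((x:ℂ) + ((-R:ℝ):ℂ) * Complex.I)‖
            ≤ (2 + R ^ 2) ^ a * Real.exp (-(2 * π * ξ * R)) * |1 - (-1:ℝ)| := this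
          _ = (2 + R ^ 2) ^ a * Real.exp (-(2 * π * ξ * R)) * 2 := by norm_num
      · intro x hx
        rw [Set.uIoc_of_le (by norm_num : (-1:ℝ) ≤ 1)] at hx
        exact br_norm_bottom ha (Set.mem_Icc.mpr ⟨hx.1.le, hx.2⟩) hR
    have he1 : ‖Complex.I • (∫ y : ℝ in (-R:ℝ)..0, brf a ξ (((1:ℝ):ℂ) + (y:ℝ) * Complex.I))‖
        ≤ brB a ξ := by
      rw [norm_smul, Complex.norm_I, one_mul]
      exact br_edge_integral_bound ha hξ0 (by norm_num : (1:ℝ)^2 = 1) hR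
    have he2 : ‖Complex.I • (∫ y : ℝ in (-R:ℝ)..0, brf a ξ (((-1:ℝ):ℂ) + (y:ℝ) * Complex.I))‖
        ≤ brB a ξ := by
      rw [norm_smul, Complex.norm_I, one_mul]
      exact br_edge_integral_bound ha hξ0 (by norm_num : ((-1:ℝ))^2 = 1) hR
    calc ‖_ + _ - _‖ ≤ ‖_ + _‖ + ‖_‖ := norm_sub_le _ _
      _ ≤ ‖_‖ + ‖_‖ + ‖_‖ := by gcongr; exact norm_add_le _ _
      _ ≤ (2 + R ^ 2) ^ a * Real.exp (-(2 * π * ξ * R)) * 2 + (brB a ξ + brB a ξ) := by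
        have := add_le_add (add_le_add hb he1) he2
        linarith
  -- take R → ∞
  have hlim : Filter.Tendsto
      (fun R : ℝ => (2 + R ^ 2) ^ a * Real.exp (-(2 * π * ξ * R)) * 2 + (brB a ξ + brB a ξ))
      Filter.atTop (nhds (0 * 2 + (brB a ξ + brB a ξ))) := by
    apply Filter.Tendsto.add _ tendsto_const_nhds
    apply Filter.Tendsto.mul_const
    have h0 := tendsto_rpow_mul_exp_neg_mul_atTop_nhds_zero (2*a) (2*π*ξ) (by positivity)
    apply squeeze_zero' (f := fun R : ℝ => (2 + R ^ 2) ^ a * Real.exp (-(2 * π * ξ * R)))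
        (g := fun R : ℝ => 2 ^ a * (R ^ (2*a) * Real.exp (-(2*π*ξ) * R)))
    · filter_upwards [Filter.eventually_ge_atTop (0:ℝ)] with R hR
      positivity
    · filter_upwards [Filter.eventually_ge_atTop (2:ℝ)] with R hR
      have hR0 : (0:ℝ) ≤ R := by linarith
      have h1 : (2 + R ^ 2) ^ a ≤ 2 ^ a * R ^ (2*a) := by
        have : (2 + R^2) ≤ 2 * R^2 := by nlinarith
        calc (2 + R ^ 2) ^ a ≤ (2 * R ^ 2) ^ a :=
              Real.rpow_le_rpow (by positivity) this ha.le
          _ = 2 ^ a * R ^ (2*a) := by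
              rw [Real.mul_rpow (by norm_num) (by positivity), ← Real.rpow_natCast R 2,
                ← Real.rpow_mul hR0]
              norm_num [mul_comm]
      calc (2 + R ^ 2) ^ a * Real.exp (-(2 * π * ξ * R))
          ≤ 2 ^ a * R ^ (2*a) * Real.exp (-(2 * π * ξ * R)) :=
            mul_le_mul_of_nonneg_right h1 (Real.exp_nonneg _)
        _ = 2 ^ a * (R ^ (2*a) * Real.exp (-(2*π*ξ) * R)) := by ring_nf
    · have h1 := h0.const_mul ((2:ℝ)^a)
      rw [mul_zero] at h1
      exact h1
  have := ge_of_tendsto hlim (by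
    filter_upwards [Filter.eventually_ge_atTop (0:ℝ)] with R hR
    exact key R hR)
  linarith [this]

lemma brB_le {a ξ : ℝ} (ha : 0 < a) (hξ : 1 ≤ ξ) :
    brB a ξ ≤ 3 ^ a * (Real.Gamma (a+1) + Real.Gamma (2*a+1)) * (1+ξ) ^ (-(a+1)) := by
  have h1ξ : (0:ℝ) < 1 + ξ := by linarith
  have h2π : (0:ℝ) < 2 * π * ξ := by positivity
  have hle : 1 + ξ ≤ 2 * π * ξ := by nlinarith [Real.pi_gt_three]
  have hX : (0:ℝ) < (1+ξ) ^ (-(a+1)) := Real.rpow_pos_of_pos h1ξ _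
  have t1 : (1/(2*π*ξ)) ^ (a+1) ≤ (1+ξ) ^ (-(a+1)) := by
    rw [one_div, Real.inv_rpow h2π.le, Real.rpow_neg h1ξ.le]
    apply inv_anti₀ (Real.rpow_pos_of_pos h1ξ _)
    exact Real.rpow_le_rpow h1ξ.le hle (by linarith)
  have t2 : (1/(2*π*ξ)) ^ (2*a+1) ≤ (1+ξ) ^ (-(a+1)) := by
    have s1 : (1/(2*π*ξ)) ^ (2*a+1) ≤ (1+ξ) ^ (-(2*a+1)) := by
      rw [one_div, Real.inv_rpow h2π.le, Real.rpow_neg h1ξ.le]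
      apply inv_anti₀ (Real.rpow_pos_of_pos h1ξ _)
      exact Real.rpow_le_rpow h1ξ.le hle (by linarith)
    refine s1.trans ?_
    exact Real.rpow_le_rpow_of_exponent_le (by linarith) (by linarith)
  have hG1 : 0 < Real.Gamma (a+1) := Real.Gamma_pos_of_pos (by linarith)
  have hG2 : 0 < Real.Gamma (2*a+1) := Real.Gamma_pos_of_pos (by linarith)
  have h3 : (0:ℝ) < 3 ^ a := Real.rpow_pos_of_pos (by norm_num) _
  rw [brB]
  calc 3 ^ a * ((1/(2*π*ξ)) ^ (a+1) * Real.Gamma (a+1)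
        + (1/(2*π*ξ)) ^ (2*a+1) * Real.Gamma (2*a+1))
      ≤ 3 ^ a * ((1+ξ) ^ (-(a+1)) * Real.Gamma (a+1)
        + (1+ξ) ^ (-(a+1)) * Real.Gamma (2*a+1)) := by
        apply mul_le_mul_of_nonneg_left _ h3.le
        apply add_le_add
        · exact mul_le_mul_of_nonneg_right t1 hG1.le
        · exact mul_le_mul_of_nonneg_right t2 hG2.le
    _ = 3 ^ a * (Real.Gamma (a+1) + Real.Gamma (2*a+1)) * (1+ξ) ^ (-(a+1)) := by ring

/-- Bessel-type decay of the Fourier transform of `g_a(t) = (max (1 - t²) 0)^a`: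
for `a > 0` there is `C > 0` with `|𝓕g_a(ξ)| ≤ C (1 + |ξ|)^{-(a+1)}` for all `ξ`. -/
theorem fourier_decay_bochner_riesz_kernel (a : ℝ) (ha : 0 < a) :
    ∃ C > 0, ∀ ξ : ℝ,
      ‖FourierTransform.fourier (fun t : ℝ => (((max (1 - t ^ 2) 0) ^ a : ℝ) : ℂ)) ξ‖
        ≤ C * (1 + |ξ|) ^ (-(a + 1)) := by
  have hG1 : 0 < Real.Gamma (a+1) := Real.Gamma_pos_of_pos (by linarith)
  have hG2 : 0 < Real.Gamma (2*a+1) := Real.Gamma_pos_of_pos (by linarith)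
  have h3 : (0:ℝ) < 3 ^ a := Real.rpow_pos_of_pos (by norm_num) _
  have h2 : (0:ℝ) < 2 ^ (a+2) := Real.rpow_pos_of_pos (by norm_num) _
  refine ⟨2 * 3 ^ a * (Real.Gamma (a+1) + Real.Gamma (2*a+1)) + 2 ^ (a+2), by positivity, ?_⟩
  intro ξ
  show ‖FourierTransform.fourier (brg a) ξ‖ ≤ _
  have hXpos : (0:ℝ) < (1 + |ξ|) ^ (-(a+1)) :=
    Real.rpow_pos_of_pos (by positivity) _
  rcases le_or_gt 1 (|ξ|) with h | h
  · -- large frequency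
    have hmain : ‖FourierTransform.fourier (brg a) ξ‖ ≤ 2 * brB a (|ξ|) := by
      rcases abs_cases ξ with ⟨he, _⟩ | ⟨he, _⟩
      · rw [he] at h ⊢
        exact br_main ha h
      · rw [he] at h ⊢
        have h2' := br_main ha h
        rwa [brF_even] at h2'
    refine hmain.trans ?_
    have := brB_le ha h
    calc 2 * brB a (|ξ|)
        ≤ 2 * (3 ^ a * (Real.Gamma (a+1) + Real.Gamma (2*a+1)) * (1+|ξ|) ^ (-(a+1))) := by
          linarith
      _ = 2 * 3 ^ a * (Real.Gamma (a+1) + Real.Gamma (2*a+1)) * (1+|ξ|) ^ (-(a+1)) := by ring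
      _ ≤ (2 * 3 ^ a * (Real.Gamma (a+1) + Real.Gamma (2*a+1)) + 2 ^ (a+2))
            * (1+|ξ|) ^ (-(a+1)) := by
          nlinarith [mul_pos (mul_pos (mul_pos (show (0:ℝ)<2 by norm_num) h3)
            (add_pos hG1 hG2)) hXpos]
  · -- small frequency
    have htriv := brF_trivial_bound ha ξ
    refine htriv.trans ?_
    have hX2 : (2:ℝ) ^ (-(a+1)) ≤ (1 + |ξ|) ^ (-(a+1)) := by
      rw [Real.rpow_neg (by norm_num), Real.rpow_neg (by positivity)]
      apply inv_anti₀ (Real.rpow_pos_of_pos (by positivity) _)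
      exact Real.rpow_le_rpow (by positivity) (by linarith [abs_nonneg ξ]) (by linarith)
    have key : (2:ℝ) ^ (a+2) * (2:ℝ) ^ (-(a+1)) = 2 := by
      rw [← Real.rpow_add (by norm_num : (0:ℝ) < 2),
        show a + 2 + -(a+1) = 1 by ring, Real.rpow_one]
    calc (2:ℝ) = 2 ^ (a+2) * (2:ℝ) ^ (-(a+1)) := key.symm
      _ ≤ 2 ^ (a+2) * (1 + |ξ|) ^ (-(a+1)) := by
          exact mul_le_mul_of_nonneg_left hX2 h2.le
      _ ≤ (2 * 3 ^ a * (Real.Gamma (a+1) + Real.Gamma (2*a+1)) + 2 ^ (a+2))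
            * (1+|ξ|) ^ (-(a+1)) := by
          nlinarith [mul_pos (mul_pos (mul_pos (show (0:ℝ)<2 by norm_num) h3)
            (add_pos hG1 hG2)) hXpos]
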